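/- Let W¹ and W² be two labeled walks with distinct last vertices, and suppose v is a vertex occurring at index a in W¹ and index b in W². Then the suffix-swap operation, which exchanges the suffix of W¹ starting at index a+1 with the suffix of W² starting at index b+1, is a fixed-point-free involution on such pairs: applying it twice returns the original pair, the result is again a pair of labeled walks (consecutive vertices remain adjacent), the multiset union of edges of the two walks is preserved, the multiset of labeled vertices is preserved, the pair of first vertices is preserved, the unordered pair of last vertices is preserved, and the resulting pair differs from the original pair. -/

import Mathlib

/-- The multiset of edges of a walk given as a list of vertices. -/
def edgeMultiset {V : Type*} (l : List V) : Multiset (Sym2 V) :=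
  ((l.zip l.tail).map (fun p => s(p.1, p.2)) : List (Sym2 V))

lemma edgeMultiset_cons_cons {V : Type*} (x y : V) (t : List V) :
    edgeMultiset (x :: y :: t) = s(x, y) ::ₘ edgeMultiset (y :: t) := by
  simp [edgeMultiset]

lemma edgeMultiset_append {V : Type*} (l1 l2 : List V) (v : V) (h : l1.getLast? = some v) :
    edgeMultiset (l1 ++ l2) = edgeMultiset l1 + edgeMultiset (v :: l2) := by
  induction l1 with
  | nil => simp at h
  | cons x t ih =>
    cases t with
    | nil =>
      simp only [List.getLast?_singleton, Option.some.injEq] at h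
      subst h
      simp [edgeMultiset]
    | cons y t' =>
      have h' : (y :: t').getLast? = some v := by rwa [List.getLast?_cons_cons] at h
      rw [List.cons_append, List.cons_append, edgeMultiset_cons_cons,
        ← List.cons_append, ih h', edgeMultiset_cons_cons, Multiset.cons_add]

lemma chain'_rel_of_getElem? {V : Type*} {R : V → V → Prop} {l : List V}
    (h : l.Chain' R) {i : ℕ} {x y : V} (hx : l[i]? = some x) (hy : l[i+1]? = some y) : R x y := by
  rw [List.Chain', List.isChain_iff_getElem] at h
  rw [List.getElem?_eq_some_iff] at hx hy
  obtain ⟨h1, rfl⟩ := hx; obtain ⟨h2, rfl⟩ := hy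
  simpa [List.get_eq_getElem] using h i (by omega)

lemma getLast?_take_of_le {V : Type*} {l : List V} {a : ℕ} (ha1 : 1 ≤ a) (ha2 : a ≤ l.length) :
    (l.take a).getLast? = l[a - 1]? := by
  rw [List.getLast?_eq_getElem?, List.length_take, min_eq_left ha2, List.getElem?_take,
    if_pos (by omega)]

/-- Suffix swap on a pair of labeled walks (lists of (vertex, label) pairs):
exchanging the suffix of `W1` starting at index `a+1` (1-based) with the
suffix of `W2` starting at index `b+1`, where both walks carry the vertex `v`
at positions `a` and `b` respectively and have distinct last vertices, is a
fixed-point-free involution preserving walks, the multiset of edges, the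
multiset of labeled (vertex, label) pairs, the first vertices, and the
unordered pair of last vertices. -/
theorem suffix_swap_involution
    {V : Type*} (G : SimpleGraph V) (W1 W2 : List (V × ℕ)) (a b : ℕ) (v : V)
    (ha1 : 1 ≤ a) (ha2 : a ≤ W1.length) (hb1 : 1 ≤ b) (hb2 : b ≤ W2.length)
    (hW1 : (W1.map Prod.fst).Chain' G.Adj) (hW2 : (W2.map Prod.fst).Chain' G.Adj)
    (hva : (W1.map Prod.fst)[a - 1]? = some v)
    (hvb : (W2.map Prod.fst)[b - 1]? = some v)
    (hlast : (W1.map Prod.fst).getLast? ≠ (W2.map Prod.fst).getLast?) :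
    (((W1.take a ++ W2.drop b).take a ++ (W2.take b ++ W1.drop a).drop b = W1) ∧
      ((W2.take b ++ W1.drop a).take b ++ (W1.take a ++ W2.drop b).drop a = W2)) ∧
    ((((W1.take a ++ W2.drop b).map Prod.fst).Chain' G.Adj) ∧
      (((W2.take b ++ W1.drop a).map Prod.fst).Chain' G.Adj)) ∧
    (edgeMultiset ((W1.take a ++ W2.drop b).map Prod.fst)
        + edgeMultiset ((W2.take b ++ W1.drop a).map Prod.fst)
      = edgeMultiset (W1.map Prod.fst) + edgeMultiset (W2.map Prod.fst)) ∧
    ((((W1.take a ++ W2.drop b).filter (fun p => p.2 ≠ 0) : List (V × ℕ)) : Multiset (V × ℕ))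
        + (((W2.take b ++ W1.drop a).filter (fun p => p.2 ≠ 0) : List (V × ℕ)) : Multiset (V × ℕ))
      = ((W1.filter (fun p => p.2 ≠ 0) : List (V × ℕ)) : Multiset (V × ℕ))
        + ((W2.filter (fun p => p.2 ≠ 0) : List (V × ℕ)) : Multiset (V × ℕ))) ∧
    ((W1.take a ++ W2.drop b).head? = W1.head? ∧
      (W2.take b ++ W1.drop a).head? = W2.head?) ∧
    (({((W1.take a ++ W2.drop b).map Prod.fst).getLast?,
        ((W2.take b ++ W1.drop a).map Prod.fst).getLast?} : Multiset (Option V))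
      = {(W1.map Prod.fst).getLast?, (W2.map Prod.fst).getLast?}) ∧
    ((W1.take a ++ W2.drop b, W2.take b ++ W1.drop a) ≠ (W1, W2)) := by
  have hlen1 : (W1.take a).length = a := by rw [List.length_take]; omega
  have hlen2 : (W2.take b).length = b := by rw [List.length_take]; omega
  -- getLast? of the taken prefixes (mapped) is v
  have hlastA1 : ((W1.take a).map Prod.fst).getLast? = some v := by
    rw [List.map_take, getLast?_take_of_le ha1 (by simpa using ha2)]; exact hva
  have hlastA2 : ((W2.take b).map Prod.fst).getLast? = some v := by
    rw [List.map_take, getLast?_take_of_le hb1 (by simpa using hb2)]; exact hvb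
  -- head? of the dropped suffixes (mapped)
  have hheadD1 : ((W1.drop a).map Prod.fst).head? = (W1.map Prod.fst)[a]? := by
    rw [List.map_drop, List.head?_drop]
  have hheadD2 : ((W2.drop b).map Prod.fst).head? = (W2.map Prod.fst)[b]? := by
    rw [List.map_drop, List.head?_drop]
  -- chain' of prefixes and suffixes
  have hc : ∀ (W : List (V × ℕ)) (n : ℕ), (W.map Prod.fst).Chain' G.Adj →
      ((W.take n).map Prod.fst).Chain' G.Adj ∧ ((W.drop n).map Prod.fst).Chain' G.Adj := by
    intro W n h
    rw [← List.take_append_drop n W, List.map_append, List.Chain', List.isChain_append] at h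
    exact ⟨h.1, h.2.1⟩
  have hsplice : ∀ (W : List (V × ℕ)) (n : ℕ), 1 ≤ n → (W.map Prod.fst).Chain' G.Adj →
      (W.map Prod.fst)[n - 1]? = some v →
      ∀ y ∈ ((W.drop n).map Prod.fst).head?, G.Adj v y := by
    intro W n hn h hv y hy
    rw [List.map_drop, List.head?_drop] at hy
    have : (W.map Prod.fst)[(n-1)+1]? = some y := by rwa [Nat.sub_add_cancel hn]
    exact chain'_rel_of_getElem? h hv this
  have hchain1 : ((W1.take a ++ W2.drop b).map Prod.fst).Chain' G.Adj := by
    rw [List.map_append, List.Chain', List.isChain_append]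
    refine ⟨(hc W1 a hW1).1, (hc W2 b hW2).2, ?_⟩
    intro x hx y hy
    rw [hlastA1, Option.mem_def, Option.some.injEq] at hx
    subst hx
    exact hsplice W2 b hb1 hW2 hvb y hy
  have hchain2 : ((W2.take b ++ W1.drop a).map Prod.fst).Chain' G.Adj := by
    rw [List.map_append, List.Chain', List.isChain_append]
    refine ⟨(hc W2 b hW2).1, (hc W1 a hW1).2, ?_⟩
    intro x hx y hy
    rw [hlastA2, Option.mem_def, Option.some.injEq] at hx
    subst hx
    exact hsplice W1 a ha1 hW1 hva y hy
  refine ⟨⟨?_, ?_⟩, ⟨hchain1, hchain2⟩, ?_, ?_, ⟨?_, ?_⟩, ?_, ?_⟩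
  · rw [List.take_append_of_le_length (le_of_eq hlen1.symm), List.take_of_length_le (le_of_eq hlen1),
      List.drop_append_of_le_length (le_of_eq hlen2.symm), List.drop_of_length_le (le_of_eq hlen2),
      List.nil_append, List.take_append_drop]
  · rw [List.take_append_of_le_length (le_of_eq hlen2.symm), List.take_of_length_le (le_of_eq hlen2),
      List.drop_append_of_le_length (le_of_eq hlen1.symm), List.drop_of_length_le (le_of_eq hlen1),
      List.nil_append, List.take_append_drop]
  · -- edge multisets
    rw [List.map_append, List.map_append,
      edgeMultiset_append _ _ v hlastA1, edgeMultiset_append _ _ v hlastA2]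
    conv_rhs => rw [← List.take_append_drop a W1, ← List.take_append_drop b W2,
      List.map_append, List.map_append,
      edgeMultiset_append _ _ v hlastA1, edgeMultiset_append _ _ v hlastA2]
    abel
  · -- labeled vertices
    conv_rhs => rw [← List.take_append_drop a W1, ← List.take_append_drop b W2]
    simp only [List.filter_append, ← Multiset.coe_add]
    abel
  · have hne : W1.take a ≠ [] := by intro h; rw [h] at hlen1; simp at hlen1; omega
    have hs : (W1.take a).head?.isSome := by
      rw [Option.isSome_iff_ne_none]; simpa [List.head?_eq_none_iff] using hne
    rw [List.head?_append, Option.or_of_isSome hs]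
    conv_rhs => rw [← List.take_append_drop a W1, List.head?_append,
      Option.or_of_isSome hs]
  · have hne : W2.take b ≠ [] := by intro h; rw [h] at hlen2; simp at hlen2; omega
    have hs : (W2.take b).head?.isSome := by
      rw [Option.isSome_iff_ne_none]; simpa [List.head?_eq_none_iff] using hne
    rw [List.head?_append, Option.or_of_isSome hs]
    conv_rhs => rw [← List.take_append_drop b W2, List.head?_append,
      Option.or_of_isSome hs]
  · -- last vertices
    have e1 : (W1.map Prod.fst).getLast? = ((W1.drop a).map Prod.fst).getLast?.or
        ((W1.take a).map Prod.fst).getLast? := by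
      conv_lhs => rw [← List.take_append_drop a W1, List.map_append, List.getLast?_append]
    have e2 : (W2.map Prod.fst).getLast? = ((W2.drop b).map Prod.fst).getLast?.or
        ((W2.take b).map Prod.fst).getLast? := by
      conv_lhs => rw [← List.take_append_drop b W2, List.map_append, List.getLast?_append]
    rw [List.map_append, List.map_append, List.getLast?_append, List.getLast?_append,
      hlastA1, hlastA2, e1, e2, hlastA1, hlastA2]
    rcases h1 : ((W1.drop a).map Prod.fst).getLast? with _ | x <;>
      rcases h2 : ((W2.drop b).map Prod.fst).getLast? with _ | y <;>
      simp [Multiset.pair_comm] <;> exact Multiset.cons_swap _ _ _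
  · -- fixed-point-free
    intro h
    have h1 : W1.take a ++ W2.drop b = W1 := congrArg Prod.fst h
    conv_rhs at h1 => rw [← List.take_append_drop a W1]
    have hD : W2.drop b = W1.drop a := List.append_cancel_left h1
    rcases eq_or_ne (W1.drop a) [] with hD1 | hD1
    · -- both suffixes empty: last of both walks is v
      have hb' : W2.drop b = [] := hD.trans hD1
      have ha' : a = W1.length := by
        have := List.drop_eq_nil_iff.mp hD1; omega
      have hbb : b = W2.length := by
        have := List.drop_eq_nil_iff.mp hb'; omega
      apply hlast
      rw [List.getLast?_eq_getElem?, List.getLast?_eq_getElem?, List.length_map,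
        List.length_map, ← ha', ← hbb, hva, hvb]
    · -- common nonempty suffix: last vertices equal
      apply hlast
      have hD1' : (W1.drop a).map Prod.fst ≠ [] := by simpa using hD1
      conv_lhs => rw [← List.take_append_drop a W1, List.map_append,
        List.getLast?_append_of_ne_nil _ hD1']
      conv_rhs => rw [← List.take_append_drop b W2, List.map_append, hD,
        List.getLast?_append_of_ne_nil _ hD1']
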